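/- Under the strong margin assumption (there exists t₀ > 0 with Lebesgue measure Q{x ∈ K : |f(x) − g(x)| ≤ t₀} = 0), the pseudo-distances d_Δ and d_{f,g} are equivalent: t₀ · d_Δ(G, G') ≤ 2·d_{f,g}(G, G') ≤ 2·(‖f‖_∞ + ‖g‖_∞) · d_Δ(G, G') for all measurable G, G' ⊆ K, where d_{f,g}(G,G') = ∫_K |f−g| 1_{GΔG'} dQ and d_Δ(G,G') = Q(G Δ G'). -/

import Mathlib

open MeasureTheory Set
open scoped symmDiff

theorem strong_margin_equivalence {d : ℕ} (K : Set (Fin d → ℝ)) (hK : IsCompact K)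
    (f g : (Fin d → ℝ) → ℝ) (hfm : Measurable f) (hgm : Measurable g)
    (Mf Mg : ℝ) (hf : ∀ x, |f x| ≤ Mf) (hg : ∀ x, |g x| ≤ Mg)
    (t₀ : ℝ) (ht₀ : 0 < t₀)
    (hmargin : volume {x ∈ K | |f x - g x| ≤ t₀} = 0)
    (G G' : Set (Fin d → ℝ)) (hG : MeasurableSet G) (hG' : MeasurableSet G')
    (hGK : G ⊆ K) (hG'K : G' ⊆ K) :
    t₀ * (volume (G ∆ G')).toReal
        ≤ 2 * ∫ x in K, |f x - g x| * (G ∆ G').indicator 1 x ∧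
      2 * ∫ x in K, |f x - g x| * (G ∆ G').indicator 1 x
        ≤ 2 * (Mf + Mg) * (volume (G ∆ G')).toReal := by
  set S := G ∆ G' with hSdef
  have hS : MeasurableSet S := hG.symmDiff hG'
  have hSK : S ⊆ K := symmDiff_subset_union.trans (union_subset hGK hG'K)
  have hSfin : volume S ≠ ⊤ :=
    ne_top_of_le_ne_top hK.measure_lt_top.ne (measure_mono hSK)
  have hrw : ∫ x in K, |f x - g x| * S.indicator 1 x = ∫ x in S, |f x - g x| := by
    have heq : (fun x => |f x - g x| * S.indicator 1 x)
        = S.indicator (fun x => |f x - g x|) := by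
      funext x
      by_cases hx : x ∈ S <;> simp [indicator_apply, hx]
    rw [heq, setIntegral_indicator hS, inter_eq_self_of_subset_right hSK]
  have hbound : ∀ x, |f x - g x| ≤ Mf + Mg := by
    intro x
    have h1 := abs_le.mp (hf x)
    have h2 := abs_le.mp (hg x)
    rw [abs_sub_le_iff]
    constructor <;> linarith
  have hint : IntegrableOn (fun x => |f x - g x|) S volume := by
    apply Measure.integrableOn_of_bounded hSfin ((hfm.sub hgm).abs).aestronglyMeasurable
    exact ae_of_all _ fun x => by simpa [Real.norm_eq_abs, abs_abs] using hbound x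
  -- Upper bound
  have hupper : ∫ x in S, |f x - g x| ≤ (Mf + Mg) * (volume S).toReal := by
    have := norm_setIntegral_le_of_norm_le_const (μ := volume) (s := S)
      (f := fun x => |f x - g x|) (C := Mf + Mg) (lt_top_iff_ne_top.mpr hSfin)
      (fun x _ => by simpa [Real.norm_eq_abs, abs_abs] using hbound x)
    exact (le_abs_self _).trans this
  -- Lower bound
  set M := {x ∈ K | |f x - g x| ≤ t₀} with hMdef
  have hMmeas : MeasurableSet M :=
    hK.isClosed.measurableSet.inter (measurableSet_le (hfm.sub hgm).abs measurable_const)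
  have hT : MeasurableSet (S \ M) := hS.diff hMmeas
  have hseq : S =ᵐ[volume] (S \ M) := by
    refine (ae_eq_set.mpr ⟨?_, ?_⟩)
    · refine measure_mono_null ?_ hmargin
      intro x hx
      have hxS : x ∈ S := hx.1
      by_contra hxM
      exact hx.2 ⟨hxS, hxM⟩
    · exact (congrArg volume (diff_eq_empty.mpr (diff_subset : S \ M ⊆ S))).trans measure_empty
  have hvol : volume (S \ M) = volume S := by
    exact measure_congr hseq.symm
  have hlow : t₀ * (volume S).toReal ≤ ∫ x in S, |f x - g x| := by
    rw [setIntegral_congr_set hseq, ← hvol]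
    refine setIntegral_ge_of_const_le_real hT (by rw [hvol]; exact hSfin) ?_ (hint.mono_set diff_subset)
    intro x hx
    have : ¬ (x ∈ K ∧ |f x - g x| ≤ t₀) := hx.2
    have hxK : x ∈ K := hSK hx.1
    by_contra h
    exact this ⟨hxK, le_of_not_gt (fun hc => h (le_of_lt hc))⟩
  have hnn : 0 ≤ ∫ x in S, |f x - g x| :=
    setIntegral_nonneg hS fun x _ => abs_nonneg _
  rw [hrw]
  constructor
  · linarith
  · linarith
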